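/- Let u, v ∈ F^N each have pairwise distinct coordinates over a field F, let c_0,...,c_{N-1} ∈ F be nonzero, and let h_c[u v^T] = Σ_{j=0}^{N-1} c_j (u v^T)^{∘j}. Then h_c[u v^T] is invertible and (v^{∘M})^T h_c[u v^T]^{-1} u^{∘M} = Σ_{j=0}^{N-1} s_{μ(M,N,j)}(u) s_{μ(M,N,j)}(v) / c_j for all M ≥ N. -/

import Mathlib

open Matrix BigOperators

/-- Complete homogeneous symmetric polynomial `h_k`, as a function of a point `x ∈ F^N`. -/
def hfun {F : Type*} [CommRing F] {N : ℕ} (x : Fin N → F) (k : ℕ) : F :=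
  ∑ d ∈ Finset.univ.filter (fun d : Fin N → Fin (k + 1) => ∑ i, (d i : ℕ) = k),
    ∏ i, x i ^ (d i : ℕ)

/-- Schur polynomial (via the Jacobi–Trudi identity) of the partition `lam`,
evaluated at the point `x ∈ F^N`. -/
def schurAt {F : Type*} [CommRing F] {N : ℕ} (x : Fin N → F) (lam : Fin N → ℕ) : F :=
  Matrix.det (Matrix.of fun i j : Fin N =>
    if (i : ℕ) ≤ lam i + (j : ℕ) then hfun x (lam i + (j : ℕ) - (i : ℕ)) else 0)

/-- The hook partition `μ(M,N,j) = (M-N+1, 1^{N-j-1}, 0^j)`. -/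
def hookP (M N j : ℕ) : Fin N → ℕ :=
  fun i => if (i : ℕ) = 0 then M - N + 1 else if (i : ℕ) < N - j then 1 else 0

/-- Vandermonde determinant `Δ_N(x) = ∏_{i<j} (x_i - x_j)`. -/
def vdm {F : Type*} [CommRing F] {N : ℕ} (x : Fin N → F) : F :=
  ∏ i : Fin N, ∏ j ∈ Finset.Ioi i, (x i - x j)

namespace RayleighAux

variable {F : Type*} [CommRing F] {N : ℕ}

/-- geometric series -/
noncomputable def geom (y : F) : PowerSeries F := PowerSeries.mk fun n => y ^ n

lemma one_sub_mul_geom (y : F) :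
    ((1 : PowerSeries F) - PowerSeries.C y * PowerSeries.X) * geom y = 1 := by
  ext n
  rw [sub_mul, one_mul, map_sub, mul_assoc]
  rcases n with _ | n
  · simp [geom]
  · simp only [PowerSeries.coeff_C_mul, geom, PowerSeries.coeff_succ_X_mul,
      PowerSeries.coeff_mk]
    simp [pow_succ, mul_comm]

lemma hfun_zero (x : Fin N → F) : hfun x 0 = 1 := by
  unfold hfun
  rw [Finset.filter_true_of_mem (fun d _ => by simp [Fin.fin_one_eq_zero])]
  simp

lemma mk_hfun (x : Fin N → F) :
    PowerSeries.mk (hfun x) = ∏ i : Fin N, geom (x i) := by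
  ext k
  rw [PowerSeries.coeff_mk, PowerSeries.coeff_prod]
  unfold hfun
  refine Finset.sum_nbij' (i := fun d => Finsupp.equivFunOnFinite.symm fun i => (d i : ℕ))
    (j := fun l i => (⟨min (l i) k, by omega⟩ : Fin (k+1))) ?_ ?_ ?_ ?_ ?_
  · intro d hd
    simp only [Finset.mem_filter, Finset.mem_univ, true_and] at hd
    simp only [Finset.mem_finsuppAntidiag]
    constructor
    · simpa [Finsupp.sum] using hd
    · exact fun i _ => Finset.mem_univ i
  · intro l hl
    simp only [Finset.mem_finsuppAntidiag] at hl
    have hle : ∀ i, l i ≤ k := by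
      intro i
      calc l i ≤ ∑ i' : Fin N, l i' := Finset.single_le_sum (fun _ _ => Nat.zero_le _) (Finset.mem_univ i)
      _ = k := hl.1
    simp only [Finset.mem_filter, Finset.mem_univ, true_and]
    calc ∑ i : Fin N, ((⟨min (l i) k, by omega⟩ : Fin (k+1)) : ℕ) = ∑ i : Fin N, l i := by
          exact Finset.sum_congr rfl fun i _ => by simp [min_eq_left (hle i)]
      _ = k := hl.1
  · intro d hd
    funext i
    have : (d i : ℕ) < k + 1 := (d i).isLt
    ext
    simp [min_eq_left (by omega : (d i : ℕ) ≤ k)]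
  · intro l hl
    simp only [Finset.mem_finsuppAntidiag] at hl
    have hle : ∀ i, l i ≤ k := by
      intro i
      calc l i ≤ ∑ i' : Fin N, l i' := Finset.single_le_sum (fun _ _ => Nat.zero_le _) (Finset.mem_univ i)
      _ = k := hl.1
    ext i
    simp [min_eq_left (hle i)]
  · intro d hd
    apply Finset.prod_congr rfl
    intro i _
    simp [geom]

noncomputable def Qp (x : Fin N → F) (k : Fin N) : Polynomial F :=
  ∏ i ∈ Finset.univ.erase k, (1 - Polynomial.C (x i) * Polynomial.X)

lemma Qp_coeff_eq_zero (x : Fin N → F) (k : Fin N) {a : ℕ} (ha : N ≤ a) :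
    (Qp x k).coeff a = 0 := by
  apply Polynomial.coeff_eq_zero_of_natDegree_lt
  have h1 : (Qp x k).natDegree ≤ ∑ i ∈ Finset.univ.erase k, 1 := by
    refine le_trans (Polynomial.natDegree_prod_le _ _) (Finset.sum_le_sum fun i _ => ?_)
    refine le_trans (Polynomial.natDegree_sub_le _ _) ?_
    simp only [Polynomial.natDegree_one, max_le_iff]
    exact ⟨Nat.zero_le _, le_trans (Polynomial.natDegree_mul_le)
      (by simp [Polynomial.natDegree_X_le])⟩
  have h2 : ∑ i ∈ Finset.univ.erase k, 1 = N - 1 := by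
    rw [Finset.sum_const, smul_eq_mul, mul_one, Finset.card_erase_of_mem (Finset.mem_univ k),
      Finset.card_univ, Fintype.card_fin]
  have hN : 1 ≤ N := k.pos
  omega

lemma coe_Qp (x : Fin N → F) (k : Fin N) :
    ((Qp x k : Polynomial F) : PowerSeries F) =
      ∏ i ∈ Finset.univ.erase k, ((1 : PowerSeries F) - PowerSeries.C (x i) * PowerSeries.X) := by
  unfold Qp
  rw [← Polynomial.coeToPowerSeries.ringHom_apply, map_prod]
  refine Finset.prod_congr rfl fun i _ => ?_
  simp [Polynomial.coeToPowerSeries.ringHom_apply, Polynomial.coe_sub, Polynomial.coe_one,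
    Polynomial.coe_mul, Polynomial.coe_C, Polynomial.coe_X]

lemma Qp_mul_mk (x : Fin N → F) (k : Fin N) :
    ((Qp x k : Polynomial F) : PowerSeries F) * PowerSeries.mk (hfun x) = geom (x k) := by
  rw [coe_Qp, mk_hfun, ← Finset.prod_erase_mul Finset.univ _ (Finset.mem_univ k), ← mul_assoc,
    ← Finset.prod_mul_distrib]
  rw [Finset.prod_congr rfl fun i _ => one_sub_mul_geom (x i)]
  simp

lemma conv (x : Fin N → F) (k : Fin N) (α : ℕ) :
    ∑ a ∈ Finset.range N, (if a ≤ α then (Qp x k).coeff a * hfun x (α - a) else 0)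
      = x k ^ α := by
  have h1 : x k ^ α = PowerSeries.coeff α (geom (x k)) := by simp [geom]
  rw [h1, ← Qp_mul_mk x k, PowerSeries.coeff_mul,
    Finset.Nat.sum_antidiagonal_eq_sum_range_succ_mk]
  simp only [Polynomial.coeff_coe, PowerSeries.coeff_mk]
  set g : ℕ → F := fun a => (Qp x k).coeff a * hfun x (α - a) with hg
  have key : ∀ (T : Finset ℕ), Finset.range N ⊆ T → Finset.range (α+1) ⊆ T →
      ∑ a ∈ T, (if a ≤ α then g a else 0) = ∑ a ∈ Finset.range (α+1), g a := by
    intro T hT1 hT2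
    rw [← Finset.sum_subset hT2 (fun a _ ha => by
      rw [if_neg]; simpa [Nat.lt_succ_iff] using ha)]
    exact Finset.sum_congr rfl fun a ha => if_pos (by simpa [Nat.lt_succ_iff] using ha)
  have key2 : ∑ a ∈ Finset.range N, (if a ≤ α then g a else 0)
      = ∑ a ∈ Finset.range (N + (α+1)), (if a ≤ α then g a else 0) := by
    refine Finset.sum_subset (Finset.range_subset_range.2 (by omega)) fun a ha hna => ?_
    have : N ≤ a := by simpa using hna
    rw [hg]
    simp [Qp_coeff_eq_zero x k this]
  rw [key2, key _ (Finset.range_subset_range.2 (by omega)) (Finset.range_subset_range.2 (by omega))]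

noncomputable def Bm (x : Fin N → F) : Matrix (Fin N) (Fin N) F :=
  Matrix.of fun j k => (Qp x k).coeff (N - 1 - (j : ℕ))

def JT (x : Fin N → F) (lam : Fin N → ℕ) : Matrix (Fin N) (Fin N) F :=
  Matrix.of fun i j : Fin N =>
    if (i : ℕ) ≤ lam i + (j : ℕ) then hfun x (lam i + (j : ℕ) - (i : ℕ)) else 0

def Am (x : Fin N → F) (lam : Fin N → ℕ) : Matrix (Fin N) (Fin N) F :=
  Matrix.of fun i k => x k ^ (lam i + (N - 1) - (i : ℕ))

lemma schurAt_eq (x : Fin N → F) (lam : Fin N → ℕ) : schurAt x lam = (JT x lam).det := rfl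

lemma JT_mul_B (x : Fin N → F) (lam : Fin N → ℕ) : JT x lam * Bm x = Am x lam := by
  ext i k
  rw [Matrix.mul_apply]
  simp only [JT, Bm, Am, Matrix.of_apply]
  set α := lam i + (N - 1) - (i : ℕ) with hα
  have hiN : (i : ℕ) < N := i.isLt
  have step1 : ∑ j : Fin N,
      (if (i : ℕ) ≤ lam i + (j : ℕ) then hfun x (lam i + (j : ℕ) - (i : ℕ)) else 0) *
        (Qp x k).coeff (N - 1 - (j : ℕ))
      = ∑ j ∈ Finset.range N,
      (if (i : ℕ) ≤ lam i + j then hfun x (lam i + j - (i : ℕ)) else 0) *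
        (Qp x k).coeff (N - 1 - j) := by
    exact Fin.sum_univ_eq_sum_range (fun j =>
      (if (i : ℕ) ≤ lam i + j then hfun x (lam i + j - (i : ℕ)) else 0) *
        (Qp x k).coeff (N - 1 - j)) N
  rw [step1, ← Finset.sum_range_reflect, ← conv x k α]
  refine Finset.sum_congr rfl fun a ha => ?_
  have haN : a < N := Finset.mem_range.mp ha
  have h2 : N - 1 - (N - 1 - a) = a := by omega
  rw [h2]
  by_cases hle : a ≤ α
  · rw [if_pos hle, if_pos (by omega), mul_comm]
    congr 2
    omega
  · rw [if_neg hle, if_neg (by omega), zero_mul]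

lemma det_JT_zero (x : Fin N → F) : (JT x (fun _ => 0)).det = 1 := by
  have h : (JT x (fun _ => 0)).BlockTriangular id := by
    intro i j hij
    simp only [JT, Matrix.of_apply, zero_add]
    rw [if_neg]
    exact fun h => absurd (Fin.le_def.mpr h) (not_le.mpr hij)
  rw [Matrix.det_of_upperTriangular h]
  refine Finset.prod_eq_one fun i _ => ?_
  simp [JT, hfun_zero]

def piFun (N j : ℕ) : Fin N → Fin N := fun k =>
  if h : (k : ℕ) = j then ⟨0, k.pos⟩
  else if h2 : (k : ℕ) < j then ⟨N - 1 - (k : ℕ), by have := k.isLt; omega⟩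
  else ⟨N - (k : ℕ), by have := k.isLt; omega⟩

lemma piFun_injective (N j : ℕ) : Function.Injective (piFun N j) := by
  intro a b hab
  have ha := a.isLt
  have hb := b.isLt
  unfold piFun at hab
  apply Fin.ext
  split_ifs at hab <;> simp only [Fin.mk.injEq] at hab <;> omega

noncomputable def piP (N j : ℕ) : Equiv.Perm (Fin N) :=
  Equiv.ofBijective _ ((Finite.injective_iff_bijective).mp (piFun_injective N j))

lemma piP_exp (Mn N : ℕ) (hMN : N ≤ Mn) (j : ℕ) (hj : j < N) (k : Fin N) :
    hookP Mn N j (piP N j k) + (N - 1) - ((piP N j k : Fin N) : ℕ)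
      = if (k : ℕ) = j then Mn else (k : ℕ) := by
  have hk := k.isLt
  have : piP N j k = piFun N j k := rfl
  rw [this]
  unfold piFun hookP
  split_ifs <;> simp_all <;> omega

/-- sign of a permutation, cast into `F` -/
def sF (σ : Equiv.Perm (Fin N)) : F := ((Equiv.Perm.sign σ : ℤ) : F)

lemma sF_mul_self (σ : Equiv.Perm (Fin N)) : (sF σ : F) * sF σ = 1 := by
  unfold sF
  rw [← Int.cast_mul, ← Units.val_mul, Int.units_mul_self, Units.val_one, Int.cast_one]

lemma det_Bm (x : Fin N → F) :
    (Bm x).det = sF (Fin.revPerm : Equiv.Perm (Fin N)) * (vandermonde x).det := by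
  have hd := congrArg Matrix.det (JT_mul_B x (fun _ => 0))
  rw [Matrix.det_mul, det_JT_zero, one_mul] at hd
  rw [hd]
  have h1 : Am x (fun _ => 0) = ((vandermonde x)ᵀ).submatrix (Fin.revPerm) id := by
    ext i k
    simp only [Am, Matrix.of_apply, Matrix.submatrix_apply, Matrix.transpose_apply,
      vandermonde_apply, id, Fin.revPerm_apply, Fin.val_rev]
    congr 1
    have := i.isLt
    omega
  rw [h1, Matrix.det_permute, Matrix.det_transpose, sF]

lemma det_updateColumn (Mn : ℕ) (hMN : N ≤ Mn) (x : Fin N → F) (j : Fin N) :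
    ((vandermonde x).updateCol j (fun i => x i ^ Mn)).det
      = sF (piP N (j : ℕ)) * (sF (Fin.revPerm : Equiv.Perm (Fin N)) *
          (schurAt x (hookP Mn N (j : ℕ)) * (vandermonde x).det)) := by
  rw [← Matrix.det_transpose]
  have h1 : ((vandermonde x).updateCol j fun i => x i ^ Mn)ᵀ
      = (Am x (hookP Mn N (j : ℕ))).submatrix (piP N (j : ℕ)) id := by
    ext k i
    simp only [Matrix.transpose_apply, Matrix.updateCol_apply, Matrix.submatrix_apply,
      id, Am, Matrix.of_apply, vandermonde_apply]
    rw [piP_exp Mn N hMN (j : ℕ) j.isLt k]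
    by_cases hkj : k = j
    · rw [if_pos hkj, if_pos (by rw [hkj])]
    · rw [if_neg hkj, if_neg (fun h => hkj (Fin.ext h))]
  rw [h1, Matrix.det_permute]
  have h2 := congrArg Matrix.det (JT_mul_B x (hookP Mn N (j : ℕ)))
  rw [Matrix.det_mul, ← schurAt_eq, det_Bm x] at h2
  rw [← h2]
  unfold sF
  push_cast
  ring

section FieldPart

variable {F : Type*} [Field F] {N : ℕ}

lemma wx_eq (Mn : ℕ) (hMN : N ≤ Mn) (x : Fin N → F) (hx : (vandermonde x).det ≠ 0)
    (j : Fin N) :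
    ((vandermonde x)⁻¹ *ᵥ fun i => x i ^ Mn) j
      = sF (piP N (j : ℕ)) * sF (Fin.revPerm : Equiv.Perm (Fin N)) *
          schurAt x (hookP Mn N (j : ℕ)) := by
  rw [Matrix.inv_def, Matrix.smul_mulVec, ← Matrix.cramer_eq_adjugate_mulVec]
  simp only [Pi.smul_apply, Matrix.cramer_apply, smul_eq_mul]
  rw [det_updateColumn Mn hMN x j, Ring.inverse_eq_inv']
  field_simp

end FieldPart

end RayleighAux

/-- Field version of the rank-one Rayleigh quotient formula: for `u, v` with pairwise
distinct coordinates, `h_c[u vᵀ]` is invertible and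
`(v^{∘M})ᵀ h_c[u vᵀ]⁻¹ u^{∘M} = Σ_j s_{μ(M,N,j)}(u) s_{μ(M,N,j)}(v) / c_j`. -/
theorem rayleigh_rank_one_schur_field {F : Type*} [Field F] (N M : ℕ) (hN : 1 ≤ N)
    (hMN : N ≤ M) (c : Fin N → F) (hc : ∀ j, c j ≠ 0) (u v : Fin N → F)
    (hu : Function.Injective u) (hv : Function.Injective v) :
    IsUnit (Matrix.det
        (Matrix.of fun i k : Fin N => ∑ j : Fin N, c j * (u i * v k) ^ (j : ℕ))) ∧
      dotProduct (fun k : Fin N => v k ^ M)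
        ((Matrix.of fun i k : Fin N => ∑ j : Fin N, c j * (u i * v k) ^ (j : ℕ))⁻¹.mulVec
          fun i : Fin N => u i ^ M) =
      ∑ j : Fin N, schurAt u (hookP M N (j : ℕ)) * schurAt v (hookP M N (j : ℕ)) / c j := by
  have hdetu : (vandermonde u).det ≠ 0 := (Matrix.det_vandermonde_ne_zero_iff).mpr hu
  have hdetv : (vandermonde v).det ≠ 0 := (Matrix.det_vandermonde_ne_zero_iff).mpr hv
  have hcprod : (∏ j : Fin N, c j) ≠ 0 := Finset.prod_ne_zero_iff.mpr fun j _ => hc j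
  have hA : (Matrix.of fun i k : Fin N => ∑ j : Fin N, c j * (u i * v k) ^ (j : ℕ))
      = vandermonde u * Matrix.diagonal c * (vandermonde v)ᵀ := by
    ext i k
    rw [Matrix.mul_apply]
    simp only [Matrix.mul_diagonal, Matrix.transpose_apply, vandermonde_apply, Matrix.of_apply]
    refine Finset.sum_congr rfl fun j _ => ?_
    rw [mul_pow]
    ring
  have hdetA : (vandermonde u * Matrix.diagonal c * (vandermonde v)ᵀ).det
      = (vandermonde u).det * ((∏ j : Fin N, c j) * (vandermonde v).det) := by
    rw [Matrix.det_mul, Matrix.det_mul, Matrix.det_diagonal, Matrix.det_transpose]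
    ring
  constructor
  · rw [hA]
    exact isUnit_iff_ne_zero.mpr (by rw [hdetA]; exact mul_ne_zero hdetu (mul_ne_zero hcprod hdetv))
  · rw [hA, Matrix.mul_inv_rev, Matrix.mul_inv_rev]
    have hDinv : (Matrix.diagonal c)⁻¹ = Matrix.diagonal (fun j => (c j)⁻¹) := by
      apply Matrix.inv_eq_right_inv
      rw [Matrix.diagonal_mul_diagonal]
      convert Matrix.diagonal_one
      exact mul_inv_cancel₀ (hc _)
    rw [hDinv, ← Matrix.mulVec_mulVec, ← Matrix.mulVec_mulVec, ← Matrix.transpose_nonsing_inv,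
      dotProduct_mulVec, Matrix.vecMul_transpose]
    unfold dotProduct
    refine Finset.sum_congr rfl fun j _ => ?_
    rw [Matrix.mulVec_diagonal, RayleighAux.wx_eq M hMN u hdetu j, RayleighAux.wx_eq M hMN v hdetv j]
    have ht := RayleighAux.sF_mul_self (F := F) (RayleighAux.piP N (j : ℕ))
    have ht0 := RayleighAux.sF_mul_self (F := F) (Fin.revPerm : Equiv.Perm (Fin N))
    rw [div_eq_mul_inv]
    linear_combination (schurAt u (hookP M N (j : ℕ)) * schurAt v (hookP M N (j : ℕ)) *
      (c j)⁻¹ * RayleighAux.sF (Fin.revPerm : Equiv.Perm (Fin N)) * RayleighAux.sF (Fin.revPerm : Equiv.Perm (Fin N))) * ht +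
      (schurAt u (hookP M N (j : ℕ)) * schurAt v (hookP M N (j : ℕ)) * (c j)⁻¹) * ht0
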